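/- arXiv:1511.03069 — 3 statements merged into one kernel-verified Lean document; each statement's English description precedes it below -/
import Mathlib

section
/- In the diagram C̃_n (a path 0,1,...,n where both end vertices 0 and n are long: T_0 and T_n are identity maps, while T_1 adds a_0 + a_2 to a_1 and T_{n-1} adds a_{n-2} + a_n to a_{n-1}), the labels at the two ends are invariant under all moves, and the number of equivalence classes equals 2n + 2. -/
/-- The move `T_i` on the diagram `C̃_n` (vertices `0,…,n` in a path, with both end
vertices `0` and `n` long: `T_0` and `T_n` are identities, while every inner vertex sees
both of its path-neighbors). -/
def moveCt (n : ℕ) (i : Fin (n + 1)) (a : Fin (n + 1) → ZMod 2) : Fin (n + 1) → ZMod 2 :=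
  fun j =>
    if j = i then
      a i + ∑ k ∈ Finset.univ.filter
        (fun k : Fin (n + 1) =>
          (k.val + 1 = i.val ∨ i.val + 1 = k.val) ∧ i.val ≠ 0 ∧ i.val ≠ n), a k
    else a j

namespace CtAux

variable (n : ℕ)

abbrev St := Fin (n + 1) → ZMod 2

abbrev Rel : St n → St n → Prop := fun a b => ∃ i, b = moveCt n i a

def pos (i : ℕ) : Fin (n + 1) := ⟨min i n, by omega⟩

variable {n}

lemma pos_val {i : ℕ} (h : i ≤ n) : (pos n i).val = i := by
  simp [pos, min_eq_left h]

/-- difference sequence -/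
def d (a : St n) (q : ℕ) : ℕ := if a (pos n q) = a (pos n (q + 1)) then 0 else 1

def wt (a : St n) : ℕ := ∑ q ∈ Finset.range n, d a q

def mea (a : St n) : ℕ := ∑ q ∈ Finset.range n, q * d a q

def canon (n : ℕ) (c : ZMod 2) (k : ℕ) : St n := fun j => c + ((min j.val k : ℕ) : ZMod 2)

lemma d01 (a : St n) (q : ℕ) : d a q = 0 ∨ d a q = 1 := by
  unfold d; split <;> simp

lemma wt_le (a : St n) : wt a ≤ n := by
  calc wt a ≤ ∑ _q ∈ Finset.range n, 1 :=
        Finset.sum_le_sum (fun q _ => by rcases d01 a q with h | h <;> omega)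
    _ = n := by simp

lemma move_apply_ne {i j : Fin (n + 1)} (h : j ≠ i) (a : St n) : moveCt n i a j = a j := by
  simp [moveCt, h]

lemma move_end {i : Fin (n + 1)} (h : i.val = 0 ∨ i.val = n) (a : St n) :
    moveCt n i a i = a i := by
  have hemp : Finset.univ.filter
      (fun k : Fin (n + 1) =>
        (k.val + 1 = i.val ∨ i.val + 1 = k.val) ∧ i.val ≠ 0 ∧ i.val ≠ n) = ∅ := by
    apply Finset.filter_false_of_mem
    rintro k - ⟨-, h0, hn⟩
    rcases h with h | h <;> simp_all
  simp only [moveCt, hemp]; simp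

lemma move_zero (i : Fin (n + 1)) (a : St n) : moveCt n i a 0 = a 0 := by
  by_cases h : (0 : Fin (n + 1)) = i
  · subst h; exact move_end (Or.inl rfl) a
  · exact move_apply_ne h a

lemma move_last (i : Fin (n + 1)) (a : St n) : moveCt n i a (Fin.last n) = a (Fin.last n) := by
  by_cases h : (Fin.last n) = i
  · subst h; exact move_end (Or.inr rfl) a
  · exact move_apply_ne h a

lemma move_inner {i : Fin (n + 1)} (h1 : i.val ≠ 0) (h2 : i.val ≠ n) (a : St n) :
    moveCt n i a i = a i + (a (pos n (i.val - 1)) + a (pos n (i.val + 1))) := by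
  have hlt : i.val < n := lt_of_le_of_ne (Nat.lt_succ_iff.mp i.isLt) h2
  have hv1 : (pos n (i.val - 1)).val = i.val - 1 := pos_val (by omega)
  have hv2 : (pos n (i.val + 1)).val = i.val + 1 := pos_val (by omega)
  have hne : pos n (i.val - 1) ≠ pos n (i.val + 1) := by
    intro h; rw [Fin.ext_iff, hv1, hv2] at h; omega
  have hset : Finset.univ.filter
      (fun k : Fin (n + 1) =>
        (k.val + 1 = i.val ∨ i.val + 1 = k.val) ∧ i.val ≠ 0 ∧ i.val ≠ n)
      = {pos n (i.val - 1), pos n (i.val + 1)} := by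
    ext k
    simp only [Finset.mem_filter, Finset.mem_univ, true_and, Finset.mem_insert,
      Finset.mem_singleton, Fin.ext_iff, hv1, hv2]
    constructor
    · rintro ⟨h, -, -⟩; omega
    · intro h; exact ⟨by omega, h1, h2⟩
  simp only [moveCt, hset]; simp [Finset.sum_pair hne]

section MoveD

variable {i : Fin (n + 1)} (h1 : i.val ≠ 0) (h2 : i.val ≠ n) (a : St n)

lemma hlt' (h2 : i.val ≠ n) : i.val < n := lt_of_le_of_ne (Nat.lt_succ_iff.mp i.isLt) h2

include h1 h2 in
lemma d_move_left : d (moveCt n i a) (i.val - 1) = d a i.val := by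
  have hlt : i.val < n := hlt' h2
  have hm1 : 1 ≤ i.val := Nat.one_le_iff_ne_zero.mpr h1
  have e1 : pos n (i.val - 1 + 1) = i := by
    rw [Fin.ext_iff, pos_val (by omega)]; omega
  have e2 : pos n (i.val - 1) ≠ i := by
    rw [Ne, Fin.ext_iff, pos_val (by omega)]; omega
  have e0 : pos n i.val = i := by rw [Fin.ext_iff, pos_val (by omega)]
  unfold d
  rw [e1, e0, move_inner h1 h2, move_apply_ne e2]
  have key : ∀ x y z : ZMod 2, (x = y + (x + z) ↔ y = z) := by decide
  exact if_congr (key _ _ _) rfl rfl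

include h1 h2 in
lemma d_move_right : d (moveCt n i a) i.val = d a (i.val - 1) := by
  have hlt : i.val < n := hlt' h2
  have hm1 : 1 ≤ i.val := Nat.one_le_iff_ne_zero.mpr h1
  have e0 : pos n i.val = i := by rw [Fin.ext_iff, pos_val (by omega)]
  have e2 : pos n (i.val + 1) ≠ i := by
    rw [Ne, Fin.ext_iff, pos_val (by omega)]; omega
  unfold d
  rw [e0, move_inner h1 h2, move_apply_ne e2]
  have e3 : pos n (i.val - 1 + 1) = pos n i.val := by
    rw [Fin.ext_iff, pos_val (by omega), pos_val (by omega)]; omega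
  rw [e3, e0]
  have key : ∀ x y z : ZMod 2, (x + (y + z) = z ↔ y = x) := by decide
  exact if_congr (key _ _ _) rfl rfl

include h1 h2 in
lemma d_move_other {q : ℕ} (hq : q < n) (hq1 : q ≠ i.val - 1) (hq2 : q ≠ i.val) :
    d (moveCt n i a) q = d a q := by
  have hlt : i.val < n := hlt' h2
  have hm1 : 1 ≤ i.val := Nat.one_le_iff_ne_zero.mpr h1
  have e1 : pos n q ≠ i := by rw [Ne, Fin.ext_iff, pos_val (by omega)]; omega
  have e2 : pos n (q + 1) ≠ i := by rw [Ne, Fin.ext_iff, pos_val (by omega)]; omega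
  unfold d
  rw [move_apply_ne e1, move_apply_ne e2]

include h1 h2 in
lemma wt_move_inner : wt (moveCt n i a) = wt a := by
  have hlt : i.val < n := hlt' h2
  have hm1 : 1 ≤ i.val := Nat.one_le_iff_ne_zero.mpr h1
  unfold wt
  refine Finset.sum_equiv (Equiv.swap (i.val - 1) i.val) ?_ ?_
  · intro q
    simp only [Finset.mem_range, Equiv.swap_apply_def]
    split <;> rename_i h
    · omega
    · split <;> omega
  · intro q hq
    simp only [Finset.mem_range] at hq
    rcases eq_or_ne q (i.val - 1) with rfl | hq1
    · rw [Equiv.swap_apply_left, d_move_left h1 h2]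
    rcases eq_or_ne q i.val with rfl | hq2
    · rw [Equiv.swap_apply_right, d_move_right h1 h2]
    · rw [Equiv.swap_apply_of_ne_of_ne hq1 hq2, d_move_other h1 h2 a hq hq1 hq2]

end MoveD

lemma move_id {i : Fin (n + 1)} (h : i.val = 0 ∨ i.val = n) (a : St n) :
    moveCt n i a = a := by
  funext j
  by_cases hj : j = i
  · subst hj; exact move_end h a
  · exact move_apply_ne hj a

lemma wt_move (i : Fin (n + 1)) (a : St n) : wt (moveCt n i a) = wt a := by
  by_cases h1 : i.val = 0
  · rw [move_id (Or.inl h1)]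
  by_cases h2 : i.val = n
  · rw [move_id (Or.inr h2)]
  · exact wt_move_inner h1 h2 a

lemma sum_ite_min (k : ℕ) : ∀ j, (∑ r ∈ Finset.range j, if r < k then 1 else 0) = min j k := by
  intro j
  induction j with
  | zero => simp
  | succ j ih => rw [Finset.sum_range_succ, ih]; split <;> omega

lemma tel (a : St n) : ∀ m, m ≤ n →
    a (pos n m) = a 0 + ((∑ r ∈ Finset.range m, d a r : ℕ) : ZMod 2) := by
  intro m
  induction m with
  | zero =>
    intro _
    have : pos n 0 = 0 := by rw [Fin.ext_iff, pos_val (by omega)]; simp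
    simp [this]
  | succ m ih =>
    intro h
    rw [Finset.sum_range_succ, Nat.cast_add, ← add_assoc, ← ih (by omega)]
    unfold d
    split <;> rename_i h'
    · simpa using h'.symm
    · have key : ∀ x y : ZMod 2, ¬x = y → y = x + ((1 : ℕ) : ZMod 2) := by decide
      exact key _ _ h'

lemma sorted_eq (a : St n) (H : ∀ p, p + 1 < n → ¬(d a p = 0 ∧ d a (p + 1) = 1)) :
    a = canon n (a 0) (wt a) := by
  have anti : ∀ p q, p ≤ q → q < n → d a p = 0 → d a q = 0 := by
    intro p q hpq hq h0
    induction q, hpq using Nat.le_induction with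
    | base => exact h0
    | succ q hq' ih =>
      rcases d01 a (q + 1) with h | h
      · exact h
      · exact absurd ⟨ih (by omega), h⟩ (H q (by omega))
  have hone : ∀ q, q < n → q < wt a → d a q = 1 := by
    intro q hq hw
    rcases d01 a q with h | h
    · exfalso
      have : wt a ≤ ∑ r ∈ Finset.range n, if r < q then 1 else 0 := by
        refine Finset.sum_le_sum ?_
        intro r hr
        simp only [Finset.mem_range] at hr
        by_cases hrq : r < q
        · rcases d01 a r with h' | h' <;> simp [hrq, h']
        · rw [anti q r (by omega) hr h]; simp
      rw [sum_ite_min] at this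
      omega
    · exact h
  have hzero : ∀ q, q < n → wt a ≤ q → d a q = 0 := by
    intro q hq hw
    rcases d01 a q with h | h
    · exact h
    · exfalso
      have hall : ∀ r, r < n → r ≤ q → d a r = 1 := by
        intro r hr hrq
        rcases d01 a r with h' | h'
        · exact absurd (anti r q hrq hq h') (by omega)
        · exact h'
      have : ∑ r ∈ Finset.range (q + 1), d a r ≤ wt a :=
        Finset.sum_le_sum_of_subset (by
          intro x hx; simp only [Finset.mem_range] at *; omega)
      have heq : ∑ r ∈ Finset.range (q + 1), d a r = q + 1 := by
        rw [Finset.sum_congr rfl (fun r hr => by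
          simp only [Finset.mem_range] at hr
          exact hall r (by omega) (by omega))]
        simp
      omega
  have hsum : ∀ j, j ≤ n → ∑ r ∈ Finset.range j, d a r = min j (wt a) := by
    intro j hj
    rw [Finset.sum_congr rfl (fun r hr => ?_), sum_ite_min]
    simp only [Finset.mem_range] at hr
    by_cases hrw : r < wt a
    · rw [hone r (by omega) hrw]; simp [hrw]
    · rw [hzero r (by omega) (by omega)]; simp [hrw]
  funext j
  have hpj : pos n j.val = j := by
    rw [Fin.ext_iff, pos_val (Nat.lt_succ_iff.mp j.isLt)]
  have := tel a j.val (Nat.lt_succ_iff.mp j.isLt)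
  rw [hpj, hsum j.val (Nat.lt_succ_iff.mp j.isLt)] at this
  exact this

lemma sum_split (f : ℕ → ℕ) {p : ℕ} (hp : p + 1 < n) :
    ∑ q ∈ Finset.range n, f q
      = f p + f (p + 1) + ∑ q ∈ ((Finset.range n).erase p).erase (p + 1), f q := by
  rw [← Finset.add_sum_erase (Finset.range n) f (a := p) (Finset.mem_range.mpr (by omega)),
    ← Finset.add_sum_erase ((Finset.range n).erase p) f (a := p + 1)
      (Finset.mem_erase.mpr ⟨by omega, Finset.mem_range.mpr (by omega)⟩)]
  ring

lemma step (a : St n) {p : ℕ} (hp : p + 1 < n) (h0 : d a p = 0) (h1 : d a (p + 1) = 1) :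
    ∃ b : St n, Rel n a b ∧ b 0 = a 0 ∧ wt b = wt a ∧ mea b < mea a := by
  set i : Fin (n + 1) := ⟨p + 1, by omega⟩ with hi
  have hv : i.val = p + 1 := rfl
  have hv1 : i.val ≠ 0 := by omega
  have hv2 : i.val ≠ n := by omega
  refine ⟨moveCt n i a, ⟨i, rfl⟩, move_zero i a, wt_move i a, ?_⟩
  have dl : d (moveCt n i a) p = 1 := by
    have := d_move_left hv1 hv2 a
    rw [hv] at this; simpa [h1] using this
  have dr : d (moveCt n i a) (p + 1) = 0 := by
    have := d_move_right hv1 hv2 a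
    rw [hv] at this; simpa [h0] using this
  have dn : ∀ q, q < n → q ≠ p → q ≠ p + 1 → d (moveCt n i a) q = d a q := by
    intro q hq hq1 hq2
    exact d_move_other hv1 hv2 a hq (by omega) (by omega)
  unfold mea
  rw [sum_split (fun q => q * d a q) hp, sum_split (fun q => q * d (moveCt n i a) q) hp]
  have hrest : ∑ q ∈ ((Finset.range n).erase p).erase (p + 1), q * d (moveCt n i a) q
      = ∑ q ∈ ((Finset.range n).erase p).erase (p + 1), q * d a q := by
    refine Finset.sum_congr rfl ?_
    intro q hq
    simp only [Finset.mem_erase, Finset.mem_range] at hq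
    rw [dn q hq.2.2 hq.2.1 hq.1]
  rw [hrest, dl, dr, h0, h1]
  omega

lemma toCanon : ∀ (N : ℕ) (a : St n), mea a ≤ N →
    Relation.EqvGen (Rel n) a (canon n (a 0) (wt a)) := by
  intro N
  induction N with
  | zero =>
    intro a ha
    by_cases H : ∀ p, p + 1 < n → ¬(d a p = 0 ∧ d a (p + 1) = 1)
    · rw [← sorted_eq a H]; exact Relation.EqvGen.refl a
    · exfalso
      push_neg at H
      obtain ⟨p, hp, h0, h1⟩ := H
      obtain ⟨b, -, -, -, hlt⟩ := step a hp h0 h1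
      omega
  | succ N ih =>
    intro a ha
    by_cases H : ∀ p, p + 1 < n → ¬(d a p = 0 ∧ d a (p + 1) = 1)
    · rw [← sorted_eq a H]; exact Relation.EqvGen.refl a
    · push_neg at H
      obtain ⟨p, hp, h0, h1⟩ := H
      obtain ⟨b, hr, hb0, hbw, hlt⟩ := step a hp h0 h1
      have := ih b (by omega)
      rw [hb0, hbw] at this
      exact Relation.EqvGen.trans _ _ _ (Relation.EqvGen.rel _ _ hr) this

lemma canon_zero (c : ZMod 2) (k : ℕ) : canon n c k 0 = c := by
  simp [canon]

lemma wt_canon (c : ZMod 2) {k : ℕ} (hk : k ≤ n) : wt (canon n c k) = k := by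
  have hd : ∀ q, q < n → d (canon n c k) q = if q < k then 1 else 0 := by
    intro q hq
    unfold d canon
    rw [pos_val (by omega), pos_val (by omega)]
    by_cases h : q < k
    · rw [min_eq_left (by omega), min_eq_left (by omega), if_neg, if_pos h]
      intro hEq
      have h2 : ((q : ℕ) : ZMod 2) = ((q + 1 : ℕ) : ZMod 2) := by
        exact add_left_cancel hEq
      push_cast at h2
      have : (1 : ZMod 2) = 0 := by linear_combination -h2
      exact one_ne_zero this
    · rw [min_eq_right (by omega), min_eq_right (by omega), if_pos rfl, if_neg h]
  unfold wt
  rw [Finset.sum_congr rfl (fun q hq => hd q (Finset.mem_range.mp hq)), sum_ite_min]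
  omega

end CtAux

open CtAux in
/-- In `C̃_n` the labels at the two end vertices are invariant under all moves, and the
number of equivalence classes equals `2n + 2`. -/
theorem Ctilde_ends_invariant_and_card (n : ℕ) (hn : 3 ≤ n) :
    (∀ (i : Fin (n + 1)) (a : Fin (n + 1) → ZMod 2),
      moveCt n i a 0 = a 0 ∧ moveCt n i a (Fin.last n) = a (Fin.last n)) ∧
    Nat.card (Quot (fun a b : Fin (n + 1) → ZMod 2 => ∃ i, b = moveCt n i a)) =
      2 * n + 2 := by
  refine ⟨fun i a => ⟨move_zero i a, move_last i a⟩, ?_⟩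
  have hresp : ∀ a b : St n, Rel n a b →
      ((a 0, (⟨wt a, by have := wt_le a; omega⟩ : Fin (n + 1))) : ZMod 2 × Fin (n + 1))
        = (b 0, ⟨wt b, by have := wt_le b; omega⟩) := by
    rintro a b ⟨i, rfl⟩
    refine Prod.ext ?_ ?_
    · exact (move_zero i a).symm
    · simp only [Fin.mk.injEq]
      exact (wt_move i a).symm
  let f : Quot (Rel n) → ZMod 2 × Fin (n + 1) :=
    Quot.lift (fun a => (a 0, ⟨wt a, by have := wt_le a; omega⟩)) hresp
  have hbij : Function.Bijective f := by
    constructor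
    · intro x y
      obtain ⟨a, rfl⟩ := Quot.exists_rep x
      obtain ⟨b, rfl⟩ := Quot.exists_rep y
      intro h
      simp only [f, Quot.lift_mk, Prod.mk.injEq, Fin.mk.injEq] at h
      obtain ⟨h0, hw⟩ := h
      have ea := toCanon (mea a) a le_rfl
      have eb := toCanon (mea b) b le_rfl
      rw [h0, hw] at ea
      exact Quot.eqvGen_sound (Relation.EqvGen.trans _ _ _ ea (Relation.EqvGen.symm _ _ eb))
    · rintro ⟨c, k⟩
      refine ⟨Quot.mk _ (canon n c k.val), ?_⟩
      simp only [f, Quot.lift_mk]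
      have hk : k.val ≤ n := Nat.lt_succ_iff.mp k.isLt
      simp only [Prod.mk.injEq]
      exact ⟨canon_zero c k.val, Fin.ext (by simpa using wt_canon c hk)⟩
  rw [Nat.card_eq_of_bijective f hbij, Nat.card_prod, Nat.card_zmod,
    Nat.card_eq_fintype_card, Fintype.card_fin]
  omega
end

section
/- For D_n (n ≥ 4), every labeling that is not a fixed labeling is equivalent to a labeling whose values at both leaf vertices n-1 and n are 0. -/
/-- Reeder's move `T_i`. -/
def move {V : Type} [Fintype V] [DecidableEq V] (D : SimpleGraph V) [DecidableRel D.Adj]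
    (i : V) (a : V → ZMod 2) : V → ZMod 2 :=
  fun j => if j = i then a i + ∑ k ∈ D.neighborFinset i, a k else a j

/-- One step of Reeder's game: apply some move. -/
def reederStep {V : Type} [Fintype V] [DecidableEq V] (D : SimpleGraph V)
    [DecidableRel D.Adj] (a b : V → ZMod 2) : Prop :=
  ∃ i, b = move D i a

/-- Equivalence of labelings: a finite sequence of moves. -/
def reederEquiv {V : Type} [Fintype V] [DecidableEq V] (D : SimpleGraph V)
    [DecidableRel D.Adj] : (V → ZMod 2) → (V → ZMod 2) → Prop :=
  Relation.ReflTransGen (reederStep D)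

/-- The Dynkin diagram `D_n` (0-indexed): a path on vertices `0,…,n-3` together with two
extra leaves `n-2` and `n-1`, both attached to vertex `n-3`. -/
def DG (n : ℕ) : SimpleGraph (Fin n) where
  Adj i j := i ≠ j ∧
    (((i.val + 1 = j.val ∧ j.val + 3 ≤ n) ∨ (j.val + 1 = i.val ∧ i.val + 3 ≤ n)) ∨
     (i.val + 3 = n ∧ (j.val + 2 = n ∨ j.val + 1 = n)) ∨
     (j.val + 3 = n ∧ (i.val + 2 = n ∨ i.val + 1 = n)))
  symm := by constructor; intro i j h; exact ⟨Ne.symm h.1, by tauto⟩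
  loopless := by constructor; intro i h; exact h.1 rfl

instance (n : ℕ) : DecidableRel (DG n).Adj :=
  fun i j => inferInstanceAs (Decidable (_ ∧ _))

section Dn
variable {n : ℕ}

lemma DG_adj {i j : Fin n} : (DG n).Adj i j ↔ (i ≠ j ∧
    (((i.val + 1 = j.val ∧ j.val + 3 ≤ n) ∨ (j.val + 1 = i.val ∧ i.val + 3 ≤ n)) ∨
     (i.val + 3 = n ∧ (j.val + 2 = n ∨ j.val + 1 = n)) ∨
     (j.val + 3 = n ∧ (i.val + 2 = n ∨ i.val + 1 = n)))) := Iff.rfl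

lemma nbr_zero (hn : 4 ≤ n) :
    (DG n).neighborFinset ⟨0, by omega⟩ = {⟨1, by omega⟩} := by
  ext x
  have hx := x.isLt
  simp only [SimpleGraph.mem_neighborFinset, DG_adj, Finset.mem_singleton, Fin.ext_iff, ne_eq]
  omega

lemma nbr_mid (j : ℕ) (h1 : 1 ≤ j) (h2 : j + 4 ≤ n) :
    (DG n).neighborFinset ⟨j, by omega⟩ = {⟨j-1, by omega⟩, ⟨j+1, by omega⟩} := by
  ext x
  have hx := x.isLt
  simp only [SimpleGraph.mem_neighborFinset, DG_adj, Finset.mem_insert,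
    Finset.mem_singleton, Fin.ext_iff, ne_eq]
  omega

lemma nbr_branch (hn : 4 ≤ n) :
    (DG n).neighborFinset ⟨n-3, by omega⟩ =
      {⟨n-4, by omega⟩, ⟨n-2, by omega⟩, ⟨n-1, by omega⟩} := by
  ext x
  have hx := x.isLt
  simp only [SimpleGraph.mem_neighborFinset, DG_adj, Finset.mem_insert,
    Finset.mem_singleton, Fin.ext_iff, ne_eq]
  omega

lemma nbr_leaf1 (hn : 4 ≤ n) :
    (DG n).neighborFinset ⟨n-2, by omega⟩ = {⟨n-3, by omega⟩} := by
  ext x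
  have hx := x.isLt
  simp only [SimpleGraph.mem_neighborFinset, DG_adj, Finset.mem_singleton, Fin.ext_iff, ne_eq]
  omega

lemma nbr_leaf2 (hn : 4 ≤ n) :
    (DG n).neighborFinset ⟨n-1, by omega⟩ = {⟨n-3, by omega⟩} := by
  ext x
  have hx := x.isLt
  simp only [SimpleGraph.mem_neighborFinset, DG_adj, Finset.mem_singleton, Fin.ext_iff, ne_eq]
  omega

end Dn
section Dn
variable {n : ℕ}

lemma fin_mk_eq {v w : ℕ} (hv : v < n) (hw : w < n) (h : v = w) :
    (⟨v, hv⟩ : Fin n) = ⟨w, hw⟩ := by subst h; rfl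

lemma fin_mk_ne {v w : ℕ} (hv : v < n) (hw : w < n) (h : v ≠ w) :
    (⟨v, hv⟩ : Fin n) ≠ ⟨w, hw⟩ := by
  simp only [ne_eq, Fin.mk.injEq]; exact h

lemma fin_ne (x : Fin n) {v : ℕ} (h : v < n) (hne : x.val ≠ v) : x ≠ ⟨v, h⟩ :=
  fun he => hne (by rw [he])

lemma equiv_single (a : Fin n → ZMod 2) (i : Fin n) :
    reederEquiv (DG n) a (move (DG n) i a) := Relation.ReflTransGen.single ⟨i, rfl⟩

lemma move_self {V : Type} [Fintype V] [DecidableEq V] {D : SimpleGraph V} [DecidableRel D.Adj]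
    (i : V) (a : V → ZMod 2) :
    move D i a i = a i + ∑ k ∈ D.neighborFinset i, a k := by simp [move]

lemma move_other {V : Type} [Fintype V] [DecidableEq V] {D : SimpleGraph V} [DecidableRel D.Adj]
    {i j : V} (a : V → ZMod 2) (h : j ≠ i) : move D i a j = a j := by simp [move, h]

lemma sum_nbr_0 (hn : 4 ≤ n) (a : Fin n → ZMod 2) :
    ∑ k ∈ (DG n).neighborFinset ⟨0, by omega⟩, a k = a ⟨1, by omega⟩ := by
  rw [nbr_zero hn, Finset.sum_singleton]

lemma sum_nbr_mid (j : ℕ) (h1 : 1 ≤ j) (h2 : j + 4 ≤ n) (a : Fin n → ZMod 2) :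
    ∑ k ∈ (DG n).neighborFinset ⟨j, by omega⟩, a k = a ⟨j-1, by omega⟩ + a ⟨j+1, by omega⟩ := by
  rw [nbr_mid j h1 h2, Finset.sum_pair (fin_mk_ne _ _ (by omega))]

lemma sum_nbr_branch (hn : 4 ≤ n) (a : Fin n → ZMod 2) :
    ∑ k ∈ (DG n).neighborFinset ⟨n-3, by omega⟩, a k
      = a ⟨n-4, by omega⟩ + a ⟨n-2, by omega⟩ + a ⟨n-1, by omega⟩ := by
  rw [nbr_branch hn, Finset.sum_insert (by
      simp only [Finset.mem_insert, Finset.mem_singleton, Fin.mk.injEq]; omega),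
    Finset.sum_pair (fin_mk_ne _ _ (by omega)), add_assoc]

lemma sum_nbr_leaf1 (hn : 4 ≤ n) (a : Fin n → ZMod 2) :
    ∑ k ∈ (DG n).neighborFinset ⟨n-2, by omega⟩, a k = a ⟨n-3, by omega⟩ := by
  rw [nbr_leaf1 hn, Finset.sum_singleton]

lemma sum_nbr_leaf2 (hn : 4 ≤ n) (a : Fin n → ZMod 2) :
    ∑ k ∈ (DG n).neighborFinset ⟨n-1, by omega⟩, a k = a ⟨n-3, by omega⟩ := by
  rw [nbr_leaf2 hn, Finset.sum_singleton]

end Dn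
section Dn2
variable {n : ℕ}

private lemma z1 : ∀ x y z : ZMod 2, x + ((y + x) + z) = y + z := by decide
private lemma z2 : ∀ x y z w : ZMod 2, x + ((y + x) + z + w) = y + z + w := by decide
private lemma z3 : ∀ x y z : ZMod 2, x + (y + z) = y + x + z := by decide
private lemma z4 : ∀ x y z w : ZMod 2, x + (y + (x + z + w)) = y + z + w := by decide
private lemma z5 : ∀ x y z : ZMod 2, x + (x + y + z) = y + z := by decide

lemma sweep_up_aux (hn : 4 ≤ n) (a : Fin n → ZMod 2) :
    ∀ (j : ℕ) (_hj : j + 4 ≤ n), ∃ b : Fin n → ZMod 2, reederEquiv (DG n) a b ∧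
      b ⟨j, by omega⟩ = a ⟨0, by omega⟩ + a ⟨j+1, by omega⟩ ∧
      ∀ k : Fin n, j < k.val → b k = a k := by
  intro j
  induction j with
  | zero =>
    intro hj
    refine ⟨move (DG n) ⟨0, by omega⟩ a, equiv_single a _, ?_, ?_⟩
    · rw [move_self, sum_nbr_0 hn]
    · intro k hk
      exact move_other a (fin_ne k _ (by omega))
  | succ j ih =>
    intro hj
    obtain ⟨b, hab, hbj, hbk⟩ := ih (by omega)
    refine ⟨move (DG n) ⟨j+1, by omega⟩ b, hab.trans (equiv_single b _), ?_, ?_⟩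
    · rw [move_self, sum_nbr_mid (j+1) (by omega) (by omega)]
      rw [fin_mk_eq (v := j+1-1) (w := j) (by omega) (by omega) (by omega), hbj,
        hbk ⟨j+1, by omega⟩ (show j < j+1 by omega),
        hbk ⟨j+1+1, by omega⟩ (show j < j+1+1 by omega)]
      exact z1 _ _ _
    · intro k hk
      rw [move_other b (fin_ne k _ (by omega)), hbk k (by omega)]

lemma sweep_up (hn : 4 ≤ n) (a : Fin n → ZMod 2) :
    ∃ b : Fin n → ZMod 2, reederEquiv (DG n) a b ∧
      b ⟨n-3, by omega⟩ = a ⟨0, by omega⟩ + a ⟨n-2, by omega⟩ + a ⟨n-1, by omega⟩ ∧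
      b ⟨n-2, by omega⟩ = a ⟨n-2, by omega⟩ ∧ b ⟨n-1, by omega⟩ = a ⟨n-1, by omega⟩ := by
  obtain ⟨b, hab, hbj, hbk⟩ := sweep_up_aux hn a (n-4) (by omega)
  refine ⟨move (DG n) ⟨n-3, by omega⟩ b, hab.trans (equiv_single b _), ?_, ?_, ?_⟩
  · rw [move_self, sum_nbr_branch hn]
    rw [hbj, fin_mk_eq (v := n-4+1) (w := n-3) (by omega) (by omega) (by omega),
      hbk ⟨n-3, by omega⟩ (show n-4 < n-3 by omega),
      hbk ⟨n-2, by omega⟩ (show n-4 < n-2 by omega),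
      hbk ⟨n-1, by omega⟩ (show n-4 < n-1 by omega)]
    exact z2 _ _ _ _
  · rw [move_other b (fin_mk_ne _ _ (by omega)),
      hbk ⟨n-2, by omega⟩ (show n-4 < n-2 by omega)]
  · rw [move_other b (fin_mk_ne _ _ (by omega)),
      hbk ⟨n-1, by omega⟩ (show n-4 < n-1 by omega)]

lemma sweep_down_aux (hn : 4 ≤ n) (a : Fin n → ZMod 2) (k : ℕ) (hk1 : 1 ≤ k)
    (hk2 : k + 4 ≤ n) :
    ∀ d : ℕ, d < k → ∃ b : Fin n → ZMod 2, reederEquiv (DG n) a b ∧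
      b ⟨k-d, by omega⟩ = a ⟨k-d-1, by omega⟩ + a ⟨k, by omega⟩ + a ⟨k+1, by omega⟩ ∧
      (∀ i : Fin n, i.val < k-d → b i = a i) ∧ (∀ i : Fin n, k < i.val → b i = a i) := by
  intro d
  induction d with
  | zero =>
    intro hd
    refine ⟨move (DG n) ⟨k, by omega⟩ a, equiv_single a _, ?_, ?_, ?_⟩
    · rw [fin_mk_eq (v := k-0) (w := k) (by omega) (by omega) (by omega),
        fin_mk_eq (v := k-0-1) (w := k-1) (by omega) (by omega) (by omega),
        move_self, sum_nbr_mid k hk1 (by omega)]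
      exact z3 _ _ _
    · intro i hi
      exact move_other a (fin_ne i _ (by omega))
    · intro i hi
      exact move_other a (fin_ne i _ (by omega))
  | succ d ih =>
    intro hd
    obtain ⟨b, hab, hbj, hlo, hhi⟩ := ih (by omega)
    refine ⟨move (DG n) ⟨k-d-1, by omega⟩ b, hab.trans (equiv_single b _), ?_, ?_, ?_⟩
    · rw [fin_mk_eq (v := k-(d+1)) (w := k-d-1) (by omega) (by omega) (by omega),
        move_self, sum_nbr_mid (k-d-1) (by omega) (by omega),
        fin_mk_eq (v := k-d-1+1) (w := k-d) (by omega) (by omega) (by omega),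
        fin_mk_eq (v := k-d-1-1) (w := k-(d+1)-1) (by omega) (by omega) (by omega),
        hbj, hlo ⟨k-d-1, by omega⟩ (show k-d-1 < k-d by omega),
        hlo ⟨k-(d+1)-1, by omega⟩ (show k-(d+1)-1 < k-d by omega),
        fin_mk_eq (v := k-d-1) (w := k-(d+1)-1+1) (by omega) (by omega) (by omega)]
      exact z4 _ _ _ _
    · intro i hi
      rw [move_other b (fin_ne i _ (by omega)), hlo i (by omega)]
    · intro i hi
      rw [move_other b (fin_ne i _ (by omega)), hhi i (by omega)]

lemma sweep_down (hn : 4 ≤ n) (a : Fin n → ZMod 2) (k : ℕ) (hk1 : 1 ≤ k) (hk2 : k + 4 ≤ n) :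
    ∃ b : Fin n → ZMod 2, reederEquiv (DG n) a b ∧
      b ⟨0, by omega⟩ = a ⟨k, by omega⟩ + a ⟨k+1, by omega⟩ ∧
      ∀ i : Fin n, k < i.val → b i = a i := by
  obtain ⟨b, hab, hbj, hlo, hhi⟩ := sweep_down_aux hn a k hk1 hk2 (k-1) (by omega)
  refine ⟨move (DG n) ⟨0, by omega⟩ b, hab.trans (equiv_single b _), ?_, ?_⟩
  · rw [move_self, sum_nbr_0 hn]
    rw [fin_mk_eq (v := k-(k-1)) (w := 1) (by omega) (by omega) (by omega),
      fin_mk_eq (v := k-(k-1)-1) (w := 0) (by omega) (by omega) (by omega)] at hbj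
    rw [hbj, hlo ⟨0, by omega⟩ (show 0 < k-(k-1) by omega)]
    exact z5 _ _ _
  · intro i hi
    rw [move_other b (fin_ne i _ (by omega)), hhi i (by omega)]

end Dn2
section Dn3
variable {n : ℕ}

private lemma zd1 : ∀ x : ZMod 2, x ≠ 0 → x + 1 = 0 := by decide
private lemma zd2 : ∀ x y : ZMod 2, x ≠ 1 + y → x = y := by decide
private lemma zd3 : ∀ x y : ZMod 2, x ≠ 1 → x = 0 := by decide
private lemma zd4 : ∀ x y : ZMod 2, (x + y) + x + y = 0 := by decide
private lemma zd5 : ∀ x : ZMod 2, x + x = 0 := by decide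
private lemma zd6 : ∀ x y z : ZMod 2, x + z = (x + y) + (y + z) := by decide

lemma reduce_from_branch (hn : 4 ≤ n) (a : Fin n → ZMod 2) (hbr : a ⟨n-3, by omega⟩ = 1) :
    ∃ b : Fin n → ZMod 2, reederEquiv (DG n) a b ∧
      b ⟨n-2, by omega⟩ = 0 ∧ b ⟨n-1, by omega⟩ = 0 := by
  obtain ⟨b, hab, h2, h3, hbr'⟩ :
      ∃ b : Fin n → ZMod 2, reederEquiv (DG n) a b ∧ b ⟨n-2, by omega⟩ = 0 ∧
        b ⟨n-1, by omega⟩ = a ⟨n-1, by omega⟩ ∧ b ⟨n-3, by omega⟩ = 1 := by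
    by_cases h : a ⟨n-2, by omega⟩ = 0
    · exact ⟨a, Relation.ReflTransGen.refl, h, rfl, hbr⟩
    · refine ⟨move (DG n) ⟨n-2, by omega⟩ a, equiv_single a _, ?_, ?_, ?_⟩
      · rw [move_self, sum_nbr_leaf1 hn, hbr]
        exact zd1 _ h
      · have hne : (⟨n-1, by omega⟩ : Fin n) ≠ ⟨n-2, by omega⟩ := fin_mk_ne _ _ (by omega)
        exact move_other a hne
      · have hne : (⟨n-3, by omega⟩ : Fin n) ≠ ⟨n-2, by omega⟩ := fin_mk_ne _ _ (by omega)
        rw [move_other (D := DG n) a hne]; exact hbr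
  by_cases h : b ⟨n-1, by omega⟩ = 0
  · exact ⟨b, hab, h2, h⟩
  · refine ⟨move (DG n) ⟨n-1, by omega⟩ b, hab.trans (equiv_single b _), ?_, ?_⟩
    · have hne : (⟨n-2, by omega⟩ : Fin n) ≠ ⟨n-1, by omega⟩ := fin_mk_ne _ _ (by omega)
      rw [move_other b hne]; exact h2
    · rw [move_self, sum_nbr_leaf2 hn, hbr']
      exact zd1 _ h

lemma all_fixed (hn : 4 ≤ n) (a : Fin n → ZMod 2)
    (h0 : a ⟨0, by omega⟩ = a ⟨n-2, by omega⟩ + a ⟨n-1, by omega⟩)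
    (h1 : a ⟨1, by omega⟩ = 0)
    (hm : a ⟨n-3, by omega⟩ = 0)
    (hrec : ∀ (k : ℕ) (_h1 : 1 ≤ k) (_h2 : k + 4 ≤ n),
      a ⟨k, by omega⟩ + a ⟨k+1, by omega⟩ = a ⟨n-2, by omega⟩ + a ⟨n-1, by omega⟩) :
    ∀ i : Fin n, move (DG n) i a = a := by
  have key : ∀ i : Fin n, ∑ k ∈ (DG n).neighborFinset i, a k = 0 := by
    intro ⟨v, hv⟩
    by_cases hv0 : v = 0
    · rw [fin_mk_eq _ (by omega) hv0, sum_nbr_0 hn]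
      by_cases h4 : n = 4
      · rw [fin_mk_eq (w := n-3) _ (by omega) (by omega)]; exact hm
      · exact h1
    · by_cases hv1 : v = n-1
      · rw [fin_mk_eq _ (by omega) hv1, sum_nbr_leaf2 hn]; exact hm
      · by_cases hv2 : v = n-2
        · rw [fin_mk_eq _ (by omega) hv2, sum_nbr_leaf1 hn]; exact hm
        · by_cases hv3 : v = n-3
          · rw [fin_mk_eq _ (by omega) hv3, sum_nbr_branch hn]
            have hc : a ⟨n-4, by omega⟩ = a ⟨n-2, by omega⟩ + a ⟨n-1, by omega⟩ := by
              by_cases h4 : n = 4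
              · rw [fin_mk_eq (w := 0) _ (by omega) (by omega)]; exact h0
              · have := hrec (n-4) (by omega) (by omega)
                rw [fin_mk_eq (v := n-4+1) (w := n-3) (by omega) (by omega) (by omega),
                  hm, add_zero] at this
                exact this
            rw [hc]; exact zd4 _ _
          · -- mid vertex, 1 ≤ v ≤ n-4
            rw [sum_nbr_mid v (by omega) (by omega)]
            by_cases hv4 : v = 1
            · subst hv4
              have h2 : a ⟨2, by omega⟩ = a ⟨n-2, by omega⟩ + a ⟨n-1, by omega⟩ := by
                have := hrec 1 (by omega) (by omega)
                rw [h1, zero_add] at this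
                exact this
              rw [fin_mk_eq (v := 1-1) (w := 0) (by omega) (by omega) (by omega), h0,
                fin_mk_eq (v := 1+1) (w := 2) (by omega) (by omega) (by omega), h2]
              exact zd5 _
            · have e1 := hrec (v-1) (by omega) (by omega)
              have e2 := hrec v (by omega) (by omega)
              rw [fin_mk_eq (v := v-1+1) (w := v) (by omega) (by omega) (by omega)] at e1
              have h6 := zd6 (a ⟨v-1, by omega⟩) (a (⟨v, by omega⟩ : Fin n)) (a ⟨v+1, by omega⟩)
              rw [h6, e1, e2]; exact zd5 _
  intro i
  funext x
  by_cases hx : x = i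
  · subst hx
    rw [move_self, key, add_zero]
  · rw [move_other a hx]

end Dn3
private lemma zdA : ∀ x y : ZMod 2, (1 + (x + y)) + x + y = 1 := by decide
private lemma zdB : ∀ x y : ZMod 2, (x + y) + 1 = 1 + (x + y) := by decide

/-- For `D_n` (`n ≥ 4`), every labeling that is not a fixed labeling is equivalent to a
labeling whose values at both leaf vertices are 0. -/
theorem Dn_reduce_leaves (n : ℕ) (hn : 4 ≤ n) (a : Fin n → ZMod 2)
    (ha : ¬ ∀ i : Fin n, move (DG n) i a = a) :
    ∃ b : Fin n → ZMod 2, reederEquiv (DG n) a b ∧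
      ∀ j : Fin n, (j.val + 1 = n ∨ j.val + 2 = n) → b j = 0 := by
  have finish : ∀ b : Fin n → ZMod 2, reederEquiv (DG n) a b →
      b ⟨n-2, by omega⟩ = 0 → b ⟨n-1, by omega⟩ = 0 →
      ∃ b : Fin n → ZMod 2, reederEquiv (DG n) a b ∧
        ∀ j : Fin n, (j.val + 1 = n ∨ j.val + 2 = n) → b j = 0 := by
    intro b h h2 h3
    refine ⟨b, h, fun j hj => ?_⟩
    rcases hj with hj | hj
    · have e : j = ⟨n-1, by omega⟩ := Fin.ext (show j.val = n-1 by omega)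
      rw [e]; exact h3
    · have e : j = ⟨n-2, by omega⟩ := Fin.ext (show j.val = n-2 by omega)
      rw [e]; exact h2
  by_cases hm : a ⟨n-3, by omega⟩ = 1
  · obtain ⟨b, h, h2, h3⟩ := reduce_from_branch hn a hm
    exact finish b h h2 h3
  have hm0 : a ⟨n-3, by omega⟩ = 0 := zd3 _ 0 hm
  by_cases hL : a ⟨n-2, by omega⟩ = 0 ∧ a ⟨n-1, by omega⟩ = 0
  · exact finish a Relation.ReflTransGen.refl hL.1 hL.2
  have fromC1 : ∀ a' : Fin n → ZMod 2, reederEquiv (DG n) a a' →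
      a' ⟨0, by omega⟩ = 1 + (a' ⟨n-2, by omega⟩ + a' ⟨n-1, by omega⟩) →
      ∃ b : Fin n → ZMod 2, reederEquiv (DG n) a b ∧
        ∀ j : Fin n, (j.val + 1 = n ∨ j.val + 2 = n) → b j = 0 := by
    intro a' h hC
    obtain ⟨b, hb, hbm, hb2, hb3⟩ := sweep_up hn a'
    have hbm1 : b ⟨n-3, by omega⟩ = 1 := by
      rw [hbm, hC]; exact zdA _ _
    obtain ⟨b', hb', h2', h3'⟩ := reduce_from_branch hn b hbm1
    exact finish b' (h.trans (hb.trans hb')) h2' h3'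
  by_cases hC1 : a ⟨0, by omega⟩ = 1 + (a ⟨n-2, by omega⟩ + a ⟨n-1, by omega⟩)
  · exact fromC1 a Relation.ReflTransGen.refl hC1
  have h00 : a ⟨0, by omega⟩ = a ⟨n-2, by omega⟩ + a ⟨n-1, by omega⟩ := zd2 _ _ hC1
  by_cases hC2 : a ⟨1, by omega⟩ = 1
  · apply fromC1 (move (DG n) ⟨0, by omega⟩ a) (equiv_single a _)
    have hne2 : (⟨n-2, by omega⟩ : Fin n) ≠ ⟨0, by omega⟩ := fin_mk_ne _ _ (by omega)
    have hne1 : (⟨n-1, by omega⟩ : Fin n) ≠ ⟨0, by omega⟩ := fin_mk_ne _ _ (by omega)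
    rw [move_self, sum_nbr_0 hn, move_other (D := DG n) a hne2,
      move_other (D := DG n) a hne1, hC2, h00]
    exact zdB _ _
  by_cases hC3 : ∃ (k : ℕ) (_hk4 : k + 4 ≤ n), 1 ≤ k ∧
      a ⟨k, by omega⟩ + a ⟨k+1, by omega⟩ = 1 + (a ⟨n-2, by omega⟩ + a ⟨n-1, by omega⟩)
  · obtain ⟨k, hk4, hk1, hkv⟩ := hC3
    obtain ⟨b, hb, hb0, hrest⟩ := sweep_down hn a k hk1 hk4
    apply fromC1 b hb
    rw [hb0, hrest ⟨n-2, by omega⟩ (show k < n-2 by omega),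
      hrest ⟨n-1, by omega⟩ (show k < n-1 by omega)]
    exact hkv
  · exfalso
    have h1 : a ⟨1, by omega⟩ = 0 := by
      by_cases h4 : n = 4
      · rw [fin_mk_eq (v := 1) (w := n-3) (by omega) (by omega) (by omega)]; exact hm0
      · exact zd3 _ 0 hC2
    exact ha (all_fixed hn a h00 h1 hm0
      (fun k hk1 hk4 => zd2 _ _ (fun heq => hC3 ⟨k, hk4, hk1, heq⟩)))
end

section
/- In the star graph K_{1,d}, all labelings whose support has an odd number of connected components are equivalent to each other under Reeder's moves. -/
/-- Number of connected components of the support of a labeling. -/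
noncomputable def numComponents {V : Type} [Fintype V] (D : SimpleGraph V)
    (a : V → ZMod 2) : ℕ :=
  Nat.card (D.induce {v | a v = 1}).ConnectedComponent

/-- The star graph `K_{1,d}`: center `0` adjacent to `d` leaves. -/
def starG (d : ℕ) : SimpleGraph (Fin (d + 1)) where
  Adj i j := (i = 0 ∧ j ≠ 0) ∨ (j = 0 ∧ i ≠ 0)
  symm := ⟨by intro i j h; tauto⟩
  loopless := ⟨by intro i h; tauto⟩

instance (d : ℕ) : DecidableRel (starG d).Adj :=
  fun i j => inferInstanceAs (Decidable ((i = 0 ∧ j ≠ 0) ∨ (j = 0 ∧ i ≠ 0)))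

/- ========== auxiliary lemmas ========== -/

lemma zmod2_cases (x : ZMod 2) : x = 0 ∨ x = 1 := by revert x; decide

lemma move_move {V : Type} [Fintype V] [DecidableEq V] (D : SimpleGraph V) [DecidableRel D.Adj]
    (i : V) (a : V → ZMod 2) : move D i (move D i a) = a := by
  funext j
  by_cases hj : j = i
  · subst hj
    have hs : ∑ k ∈ D.neighborFinset j, (move D j a) k = ∑ k ∈ D.neighborFinset j, a k := by
      apply Finset.sum_congr rfl
      intro k hk
      have hadj := (SimpleGraph.mem_neighborFinset _ _ _).mp hk
      have hne : k ≠ j := (D.ne_of_adj hadj).symm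
      simp [move, hne]
    have h1 : move D j (move D j a) j
        = (move D j a) j + ∑ k ∈ D.neighborFinset j, (move D j a) k := by
      simp [move]
    have h2 : (move D j a) j = a j + ∑ k ∈ D.neighborFinset j, a k := by
      simp [move]
    rw [h1, hs, h2, add_assoc, CharTwo.add_self_eq_zero, add_zero]
  · simp [move, hj]

lemma step_symm {V : Type} [Fintype V] [DecidableEq V] (D : SimpleGraph V) [DecidableRel D.Adj] :
    Symmetric (reederStep D) := by
  rintro a b ⟨i, rfl⟩
  exact ⟨i, (move_move D i a).symm⟩

lemma equiv_symm {V : Type} [Fintype V] [DecidableEq V] (D : SimpleGraph V) [DecidableRel D.Adj]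
    {a b : V → ZMod 2} (h : reederEquiv D a b) : reederEquiv D b a :=
  haveI : Std.Symm (reederStep D) := ⟨step_symm D⟩
  (Relation.ReflTransGen.stdSymm (r := reederStep D)).symm _ _ h

/-- The canonical labeling: `1` on the center only. -/
def centerLab (d : ℕ) : Fin (d + 1) → ZMod 2 := fun v => if v = 0 then 1 else 0

lemma star_neighborFinset_leaf (d : ℕ) (j : Fin (d + 1)) (hj : j ≠ 0) :
    (starG d).neighborFinset j = {0} := by
  ext k
  rw [SimpleGraph.mem_neighborFinset, Finset.mem_singleton]
  show ((j = 0 ∧ k ≠ 0) ∨ (k = 0 ∧ j ≠ 0)) ↔ k = 0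
  constructor
  · rintro (⟨h1, _⟩ | ⟨h1, _⟩)
    · exact absurd h1 hj
    · exact h1
  · intro h; exact Or.inr ⟨h, hj⟩

lemma star_neighborFinset_center (d : ℕ) :
    (starG d).neighborFinset 0 = Finset.univ.erase 0 := by
  ext k
  rw [SimpleGraph.mem_neighborFinset]
  have : ((0 : Fin (d+1)) = 0 ∧ k ≠ 0) ∨ (k = 0 ∧ (0 : Fin (d+1)) ≠ 0) ↔ k ≠ 0 := by tauto
  rw [show (starG d).Adj 0 k ↔ _ from Iff.rfl]
  show ((0 : Fin (d+1)) = 0 ∧ k ≠ 0) ∨ (k = 0 ∧ (0 : Fin (d+1)) ≠ 0) ↔ _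
  rw [this]
  simp

/-- Clearing the leaves one at a time. -/
lemma reach_center (d : ℕ) : ∀ (n : ℕ) (a : Fin (d + 1) → ZMod 2),
    (Finset.univ.filter (fun v => v ≠ (0 : Fin (d + 1)) ∧ a v = 1)).card = n →
    a 0 = 1 → reederEquiv (starG d) a (centerLab d) := by
  intro n
  induction n with
  | zero =>
    intro a hcard h0
    have hfe : ∀ v : Fin (d + 1), v ≠ 0 → a v ≠ 1 := by
      intro v hv hav
      have : v ∈ Finset.univ.filter (fun v => v ≠ (0 : Fin (d + 1)) ∧ a v = 1) := by
        simp [hv, hav]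
      rw [Finset.card_eq_zero] at hcard
      simp [hcard] at this
    have : a = centerLab d := by
      funext v
      by_cases hv : v = 0
      · subst hv; simpa [centerLab] using h0
      · have := hfe v hv
        rcases zmod2_cases (a v) with h | h
        · simp [centerLab, hv, h]
        · exact absurd h this
    rw [this]
    exact Relation.ReflTransGen.refl
  | succ n ih =>
    intro a hcard h0
    have hne : (Finset.univ.filter (fun v => v ≠ (0 : Fin (d + 1)) ∧ a v = 1)).Nonempty := by
      rw [← Finset.card_pos, hcard]; omega
    obtain ⟨j, hj⟩ := hne
    simp only [Finset.mem_filter, Finset.mem_univ, true_and] at hj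
    obtain ⟨hj0, hj1⟩ := hj
    set b := move (starG d) j a with hb
    have hbj : b j = 0 := by
      simp only [hb, move, if_pos rfl, star_neighborFinset_leaf d j hj0,
        Finset.sum_singleton, hj1, h0]
      decide
    have hbother : ∀ v, v ≠ j → b v = a v := by
      intro v hv; simp [hb, move, hv]
    have hb0 : b 0 = 1 := by rw [hbother 0 (Ne.symm hj0)]; exact h0
    have hfilt : Finset.univ.filter (fun v => v ≠ (0 : Fin (d + 1)) ∧ b v = 1)
        = (Finset.univ.filter (fun v => v ≠ (0 : Fin (d + 1)) ∧ a v = 1)).erase j := by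
      ext v
      simp only [Finset.mem_filter, Finset.mem_univ, true_and, Finset.mem_erase]
      constructor
      · rintro ⟨hv0, hv1⟩
        have hvj : v ≠ j := by
          intro h; subst h; rw [hbj] at hv1; exact one_ne_zero hv1.symm
        rw [hbother v hvj] at hv1
        exact ⟨hvj, hv0, hv1⟩
      · rintro ⟨hvj, hv0, hv1⟩
        exact ⟨hv0, by rw [hbother v hvj]; exact hv1⟩
    have hcard' : (Finset.univ.filter (fun v => v ≠ (0 : Fin (d + 1)) ∧ b v = 1)).card = n := by
      rw [hfilt, Finset.card_erase_of_mem (by simp [hj0, hj1]), hcard]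
      omega
    exact Relation.ReflTransGen.head ⟨j, rfl⟩ (ih b hcard' hb0)

lemma sum_eq_card (d : ℕ) (a : Fin (d + 1) → ZMod 2) :
    ∑ k, a k = ((Finset.univ.filter (fun v => a v = 1)).card : ZMod 2) := by
  rw [← Finset.sum_filter_add_sum_filter_not Finset.univ (fun v => a v = 1)]
  have h1 : ∑ k ∈ Finset.univ.filter (fun v => a v = 1), a k
      = ((Finset.univ.filter (fun v => a v = 1)).card : ZMod 2) := by
    rw [Finset.sum_congr rfl (fun k hk => (Finset.mem_filter.mp hk).2)]
    simp
  have h2 : ∑ k ∈ Finset.univ.filter (fun v => ¬ a v = 1), a k = 0 := by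
    apply Finset.sum_eq_zero
    intro k hk
    rcases zmod2_cases (a k) with h | h
    · exact h
    · exact absurd h (Finset.mem_filter.mp hk).2
  rw [h1, h2, add_zero]

lemma numComponents_center_zero (d : ℕ) (a : Fin (d + 1) → ZMod 2) (h0 : a 0 = 0) :
    numComponents (starG d) a = Nat.card {v : Fin (d + 1) // a v = 1} := by
  have hbot : (starG d).induce {v | a v = 1} = ⊥ := by
    ext u v
    simp only [SimpleGraph.comap_adj, SimpleGraph.bot_adj, iff_false]
    rintro h
    rcases h with ⟨h1, _⟩ | ⟨h1, _⟩
    · have := u.2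
      rw [Set.mem_setOf_eq] at this
      rw [show (u : Fin (d+1)) = 0 from h1, h0] at this
      exact one_ne_zero this.symm
    · have := v.2
      rw [Set.mem_setOf_eq] at this
      rw [show (v : Fin (d+1)) = 0 from h1, h0] at this
      exact one_ne_zero this.symm
  unfold numComponents
  rw [hbot]
  symm
  apply Nat.card_eq_of_bijective ((⊥ : SimpleGraph {v : Fin (d+1) | a v = 1}).connectedComponentMk)
  constructor
  · intro u v huv
    exact (SimpleGraph.reachable_bot).mp (SimpleGraph.ConnectedComponent.eq.mp huv)
  · intro c
    exact c.exists_rep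

lemma odd_reach_center (d : ℕ) (a : Fin (d + 1) → ZMod 2)
    (ha : Odd (numComponents (starG d) a)) : reederEquiv (starG d) a (centerLab d) := by
  rcases zmod2_cases (a 0) with h0 | h0
  · -- center zero: odd number of leaves labeled 1
    have hcard : Odd (Finset.univ.filter (fun v => a v = 1)).card := by
      have := numComponents_center_zero d a h0
      rw [this] at ha
      rwa [Nat.card_eq_fintype_card, Fintype.card_subtype] at ha
    have hsum : ∑ k ∈ (starG d).neighborFinset 0, a k = 1 := by
      rw [star_neighborFinset_center d]
      have : ∑ k ∈ Finset.univ.erase 0, a k = ∑ k, a k := by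
        rw [← Finset.sum_erase_add Finset.univ a (Finset.mem_univ 0), h0, add_zero]
      rw [this, sum_eq_card]
      obtain ⟨m, hm⟩ := hcard
      rw [hm]
      push_cast
      rw [show (2 : ZMod 2) = 0 by decide]
      ring
    set b := move (starG d) 0 a with hb
    have hb0 : b 0 = 1 := by
      simp only [hb, move, if_pos rfl, hsum, h0, zero_add]
      simp
    refine Relation.ReflTransGen.head ⟨0, rfl⟩ ?_
    exact reach_center d _ b rfl hb0
  · exact reach_center d _ a rfl h0

/-- In the star graph `K_{1,d}`, all labelings whose support has an odd number of
connected components are equivalent to each other. -/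
theorem starG_odd_equiv (d : ℕ) (a b : Fin (d + 1) → ZMod 2)
    (ha : Odd (numComponents (starG d) a)) (hb : Odd (numComponents (starG d) b)) :
    reederEquiv (starG d) a b :=
  (odd_reach_center d a ha).trans (equiv_symm _ (odd_reach_center d b hb))
end
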